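/- For every nonnegative integer n, 8∫_0^2 π_{2n+1}(x)·(∫_0^x π_{2n}(u) du) dx = 2(1 − (2n+2)²/s²), where π_{2n}(z) = ((4n+3)/16)·C_{2n}^{(3/2)}(z/2) and π_{2n+1}(z) = (1 − (2n+1)²/s²)·C_{2n+1}^{(1/2)}(z/2) − s^{-2}·C_{2n+1}^{(3/2)}(z/2), and s is any nonzero real parameter. -/

import Mathlib

open Finset Real intervalIntegral

/-- The Gegenbauer (ultraspherical) polynomial `C_m^{(α)}`, via its explicit
expansion `C_m^{(α)}(x) = ∑_{k=0}^{⌊m/2⌋} (-1)^k Γ(m-k+α)/(Γ(α) k! (m-2k)!) (2x)^{m-2k}`. -/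
noncomputable def geg (α : ℝ) (m : ℕ) (x : ℝ) : ℝ :=
  ∑ k ∈ Finset.range (m / 2 + 1),
    (-1) ^ k * Real.Gamma ((m : ℝ) - k + α) /
      (Real.Gamma α * (Nat.factorial k) * (Nat.factorial (m - 2 * k))) *
        (2 * x) ^ (m - 2 * k)

/-- The even skew-orthogonal polynomial `π_{2n}(z) = ((4n+3)/16) C_{2n}^{(3/2)}(z/2)`. -/
noncomputable def piEven (n : ℕ) (z : ℝ) : ℝ :=
  ((4 * (n : ℝ) + 3) / 16) * geg (3/2) (2 * n) (z / 2)

/-- The odd skew-orthogonal polynomial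
`π_{2n+1}(z) = (1-(2n+1)²/s²) C_{2n+1}^{(1/2)}(z/2) - s⁻² C_{2n+1}^{(3/2)}(z/2)`. -/
noncomputable def piOdd (s : ℝ) (n : ℕ) (z : ℝ) : ℝ :=
  (1 - (2 * (n : ℝ) + 1) ^ 2 / s ^ 2) * geg (1/2) (2 * n + 1) (z / 2) -
    s⁻¹ ^ 2 * geg (3/2) (2 * n + 1) (z / 2)

/-- `I_n = 8 ∫_0^2 π_{2n+1}(x) (∫_0^x π_{2n}(u) du) dx`. -/
noncomputable def In (s : ℝ) (n : ℕ) : ℝ :=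
  8 * ∫ x in (0 : ℝ)..2, piOdd s n x * ∫ u in (0 : ℝ)..x, piEven n u

namespace InAux

open Polynomial


noncomputable def pp (m : ℕ) : Polynomial ℝ := (X ^ 2 - 1) ^ m

lemma pp_iter_eval (m j : ℕ) (hj : j < m) (x : ℝ) (hx : x ^ 2 - 1 = 0) :
    (Polynomial.derivative^[j] (pp m)).eval x = 0 := by
  obtain ⟨q, hq⟩ := Polynomial.pow_sub_dvd_iterate_derivative_pow (X ^ 2 - 1 : Polynomial ℝ) m j
  have h2 : (X ^ 2 - 1 : Polynomial ℝ).eval x = 0 := by simpa using hx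
  rw [pp, hq, Polynomial.eval_mul, Polynomial.eval_pow, h2, zero_pow (by omega), zero_mul]

lemma parts_step (f g : Polynomial ℝ) (h1 : g.eval 1 = 0) (h2 : g.eval (-1) = 0) :
    (∫ t in (-1:ℝ)..1, f.eval t * (Polynomial.derivative g).eval t)
      = - ∫ t in (-1:ℝ)..1, (Polynomial.derivative f).eval t * g.eval t := by
  have H := intervalIntegral.integral_mul_deriv_eq_deriv_mul
    (u := fun t => f.eval t) (u' := fun t => (Polynomial.derivative f).eval t)
    (v := fun t => g.eval t) (v' := fun t => (Polynomial.derivative g).eval t)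
    (a := (-1:ℝ)) (b := 1)
    (fun x _ => f.hasDerivAt x) (fun x _ => g.hasDerivAt x)
    ((f.derivative.continuous).intervalIntegrable _ _)
    ((g.derivative.continuous).intervalIntegrable _ _)
  rw [H]
  simp [h1, h2]

lemma parts_iter (m : ℕ) (j : ℕ) (hj : j ≤ m) (f : Polynomial ℝ) :
    (∫ t in (-1:ℝ)..1, f.eval t * (Polynomial.derivative^[m] (pp m)).eval t)
      = (-1:ℝ)^j * ∫ t in (-1:ℝ)..1,
          (Polynomial.derivative^[j] f).eval t * (Polynomial.derivative^[m-j] (pp m)).eval t := by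
  induction j with
  | zero => simp
  | succ i ih =>
    rw [ih (by omega)]
    have hlt : m - (i+1) < m := by omega
    have hsplit : Polynomial.derivative^[m - i] (pp m)
        = Polynomial.derivative (Polynomial.derivative^[m - (i+1)] (pp m)) := by
      rw [show m - i = (m - (i+1)) + 1 by omega, Function.iterate_succ_apply']
    rw [hsplit, parts_step _ _ (pp_iter_eval m _ hlt 1 (by norm_num))
        (pp_iter_eval m _ hlt (-1) (by norm_num)), Function.iterate_succ_apply']
    ring



lemma J_succ (m : ℕ) :
    (∫ t in (-1:ℝ)..1, (1 - t^2)^(m+1))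
      = (2*(m:ℝ)+2)/(2*m+3) * ∫ t in (-1:ℝ)..1, (1 - t^2)^m := by
  have hc : ∀ k : ℕ, Continuous fun t : ℝ => (1 - t^2)^k := by
    intro k; fun_prop
  have hv : ∀ x : ℝ, HasDerivAt (fun t : ℝ => -((1 - t^2)^(m+1)) / (2*(m:ℝ)+2))
      (x * (1 - x^2)^m) x := by
    intro x
    have h0 : HasDerivAt (fun t : ℝ => 1 - t^2) (-(2*x)) x := by
      simpa using ((hasDerivAt_pow 2 x).const_sub 1)
    have h1 : HasDerivAt (fun t : ℝ => -((1 - t^2)^(m+1)) / (2*(m:ℝ)+2))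
        (-(((m+1:ℕ):ℝ) * (1 - x^2)^m * -(2*x)) / (2*(m:ℝ)+2)) x :=
      ((h0.pow (m+1)).neg).div_const (2*(m:ℝ)+2)
    convert h1 using 1
    have : (2*(m:ℝ)+2) ≠ 0 := by positivity
    rw [eq_div_iff this]; push_cast
    ring
  have H := intervalIntegral.integral_mul_deriv_eq_deriv_mul
    (u := fun t : ℝ => t) (u' := fun _ => (1:ℝ))
    (v := fun t : ℝ => -((1 - t^2)^(m+1)) / (2*(m:ℝ)+2))
    (v' := fun t : ℝ => t * (1 - t^2)^m)
    (a := (-1:ℝ)) (b := 1)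
    (fun x _ => hasDerivAt_id x) (fun x _ => hv x)
    (continuous_const.intervalIntegrable _ _)
    ((continuous_id.mul (hc m)).intervalIntegrable _ _)
  -- H : ∫ t * (t*(1-t^2)^m) = 1 * v 1 - (-1) * v (-1) - ∫ 1 * v t
  have hv1 : (1:ℝ) - (1:ℝ)^2 = 0 := by norm_num
  have hvm1 : (1:ℝ) - (-1:ℝ)^2 = 0 := by norm_num
  rw [hv1, hvm1] at H
  simp only [zero_pow (Nat.succ_ne_zero m), neg_zero, zero_div, mul_zero, one_mul,
    neg_mul, sub_zero, zero_sub, neg_neg] at H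
  -- now H : ∫ t in -1..1, t * (t * (1-t^2)^m) = - ∫ t in -1..1, -(1-t^2)^(m+1)/(2m+2)
  have e1 : (∫ t in (-1:ℝ)..1, t * (t * (1 - t^2)^m)) = ∫ t in (-1:ℝ)..1, t^2 * (1-t^2)^m := by
    refine intervalIntegral.integral_congr fun t _ => ?_
    ring
  have e2 : (∫ t in (-1:ℝ)..1, -((1 - t^2)^(m+1)) / (2*(m:ℝ)+2))
      = (-(1:ℝ)/(2*m+2)) * ∫ t in (-1:ℝ)..1, (1 - t^2)^(m+1) := by
    rw [← intervalIntegral.integral_const_mul]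
    refine intervalIntegral.integral_congr fun t _ => ?_
    ring
  rw [e1, e2] at H
  have e3 : (∫ t in (-1:ℝ)..1, (1 - t^2)^(m+1))
      = (∫ t in (-1:ℝ)..1, (1 - t^2)^m) - ∫ t in (-1:ℝ)..1, t^2 * (1-t^2)^m := by
    rw [← intervalIntegral.integral_sub ((hc m).intervalIntegrable _ _)
      ((show Continuous fun t : ℝ => t^2 * (1 - t^2)^m from (continuous_pow 2).mul (hc m)).intervalIntegrable _ _)]
    refine intervalIntegral.integral_congr fun t _ => ?_
    ring
  have hne : (2*(m:ℝ)+2) ≠ 0 := by positivity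
  have hne3 : (2*(m:ℝ)+3) ≠ 0 := by positivity
  field_simp at H ⊢
  linear_combination (-1) * H + (2*(m:ℝ)+2) * e3

lemma J_val (m : ℕ) :
    (∫ t in (-1:ℝ)..1, (1 - t^2)^m)
      = 2*4^m*((m.factorial:ℝ))^2/((2*m+1).factorial) := by
  induction m with
  | zero => norm_num
  | succ i ih =>
    rw [J_succ, ih]
    rw [show 2*(i+1)+1 = (2*i+1)+1+1 by ring]
    rw [Nat.factorial_succ ((2*i+1)+1), Nat.factorial_succ (2*i+1), Nat.factorial_succ i]
    have h1 : ((2*i+1).factorial : ℝ) ≠ 0 := Nat.cast_ne_zero.mpr (Nat.factorial_ne_zero _)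
    have h2 : ((i).factorial : ℝ) ≠ 0 := Nat.cast_ne_zero.mpr (Nat.factorial_ne_zero _)
    push_cast
    have hne3 : (2*(i:ℝ)+3) ≠ 0 := by positivity
    field_simp
    ring

lemma Gamma_nat_half (n : ℕ) :
    Real.Gamma ((n:ℝ) + 1/2) = Real.sqrt π * ((2*n).factorial) / (4^n * n.factorial) := by
  induction n with
  | zero => simpa using Real.Gamma_one_half_eq
  | succ i ih =>
    have h : ((i:ℝ) + 1/2) ≠ 0 := by positivity
    have e : ((i+1:ℕ):ℝ) + 1/2 = ((i:ℝ) + 1/2) + 1 := by push_cast; ring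
    rw [e, Real.Gamma_add_one h, ih]
    rw [show 2*(i+1) = (2*i+1)+1 by ring, Nat.factorial_succ ((2*i)+1), Nat.factorial_succ (2*i),
      Nat.factorial_succ i]
    have h1 : ((2*i).factorial : ℝ) ≠ 0 := Nat.cast_ne_zero.mpr (Nat.factorial_ne_zero _)
    have h2 : ((i).factorial : ℝ) ≠ 0 := Nat.cast_ne_zero.mpr (Nat.factorial_ne_zero _)
    have h4 : ((4:ℝ)^i) ≠ 0 := by positivity
    push_cast
    field_simp
    ring




lemma pp_eq_sum (m : ℕ) :
    pp m = ∑ k ∈ Finset.range (m+1),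
      Polynomial.C ((-1:ℝ)^(k+m) * (m.choose k)) * X ^ (2*k) := by
  rw [pp, sub_pow]
  refine Finset.sum_congr rfl fun k hk => ?_
  simp only [one_pow, mul_one, map_mul, map_pow, map_neg, map_one, map_natCast, ← pow_mul]
  ring

lemma rodrigues_eval (m : ℕ) (x : ℝ) :
    (Polynomial.derivative^[m] (pp m)).eval x
      = ∑ k ∈ Finset.range (m/2+1),
          (-1:ℝ)^k * (m.choose k) * (((2*m-2*k).descFactorial m : ℕ)) * x^(m-2*k) := by
  have hterm : ∀ k : ℕ, Polynomial.derivative^[m]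
        (Polynomial.C ((-1:ℝ)^(k+m) * (m.choose k)) * X ^ (2*k))
      = Polynomial.C ((-1:ℝ)^(k+m) * (m.choose k) * ((2*k).descFactorial m : ℕ)) * X^(2*k - m) := by
    intro k
    rw [Polynomial.iterate_derivative_C_mul, Polynomial.iterate_derivative_X_pow_eq_C_mul,
      ← mul_assoc, ← Polynomial.C_mul]
  rw [pp_eq_sum, Polynomial.iterate_derivative_sum]
  simp only [hterm]
  rw [Polynomial.eval_finset_sum]
  simp only [Polynomial.eval_mul, Polynomial.eval_C, Polynomial.eval_pow, Polynomial.eval_X]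
  rw [← Finset.sum_range_reflect]
  rw [← Finset.sum_subset (Finset.range_subset_range.mpr (show m/2+1 ≤ m+1 by omega))]
  · refine Finset.sum_congr rfl fun j hj => ?_
    rw [Finset.mem_range] at hj
    have hjm : j ≤ m / 2 := by omega
    have h1 : m + 1 - 1 - j = m - j := by omega
    rw [h1]
    have hsign : (-1:ℝ)^((m-j)+m) = (-1)^j := by
      rw [show (m-j)+m = j + 2*(m - j) by omega, pow_add, pow_mul]
      norm_num
    rw [hsign, Nat.choose_symm (by omega : j ≤ m)]
    rw [show 2*(m-j) = 2*m-2*j by omega, show 2*m-2*j - m = m - 2*j by omega]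
  · intro j hjm hj
    rw [Finset.mem_range] at hjm hj
    have h1 : m + 1 - 1 - j = m - j := by omega
    rw [h1]
    have : (2*(m-j)).descFactorial m = 0 :=
      Nat.descFactorial_eq_zero_iff_lt.mpr (by omega)
    rw [this]
    simp

lemma sqrtpi_ne : Real.sqrt π ≠ 0 := by positivity

lemma geg_half_eval (m : ℕ) (x : ℝ) :
    geg (1/2) m x = (1/(2^m * m.factorial)) * (Polynomial.derivative^[m] (pp m)).eval x := by
  rw [rodrigues_eval, Finset.mul_sum, geg]
  refine Finset.sum_congr rfl fun k hk => ?_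
  rw [Finset.mem_range] at hk
  have h2k : 2*k ≤ m := by omega
  have hgam : Real.Gamma ((m:ℝ) - k + 1/2)
      = Real.sqrt π * ((2*(m-k)).factorial) / (4^(m-k) * (m-k).factorial) := by
    have e : (m:ℝ) - k = ((m - k : ℕ) : ℝ) := by
      push_cast [Nat.cast_sub (by omega : k ≤ m)]; ring
    rw [e, Gamma_nat_half]
  have c1 : (m.choose k : ℝ) * (k.factorial : ℝ) * ((m-k).factorial : ℝ) = (m.factorial : ℝ) := by
    exact_mod_cast congrArg (Nat.cast (R := ℝ))
      (Nat.choose_mul_factorial_mul_factorial (show k ≤ m by omega))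
  have c2 : ((m - 2*k).factorial : ℝ) * ((2*m-2*k).descFactorial m : ℝ)
      = ((2*m-2*k).factorial : ℝ) := by
    have := Nat.factorial_mul_descFactorial (show m ≤ 2*m-2*k by omega)
    rw [show 2*m-2*k - m = m - 2*k by omega] at this
    exact_mod_cast congrArg (Nat.cast (R := ℝ)) this
  have e2 : (2*(m-k)).factorial = (2*m-2*k).factorial := by
    rw [show 2*(m-k) = 2*m-2*k by omega]
  have h4 : (4:ℝ)^(m-k) = 2^m * 2^(m-2*k) := by
    rw [show (4:ℝ) = 2^2 by norm_num, ← pow_mul, ← pow_add]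
    congr 1
    omega
  rw [hgam, Real.Gamma_one_half_eq, e2, h4, mul_pow]
  have hf1 : ((k.factorial : ℝ)) ≠ 0 := Nat.cast_ne_zero.mpr (Nat.factorial_ne_zero _)
  have hf2 : (((m-2*k).factorial : ℝ)) ≠ 0 := Nat.cast_ne_zero.mpr (Nat.factorial_ne_zero _)
  have hf3 : (((m-k).factorial : ℝ)) ≠ 0 := Nat.cast_ne_zero.mpr (Nat.factorial_ne_zero _)
  have hf4 : (((m).factorial : ℝ)) ≠ 0 := Nat.cast_ne_zero.mpr (Nat.factorial_ne_zero _)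
  have h2m : (2:ℝ)^m ≠ 0 := by positivity
  have h2mk : (2:ℝ)^(m-2*k) ≠ 0 := by positivity
  have hdesc : (((2*m-2*k).descFactorial m : ℕ) : ℝ)
      = ((2*m-2*k).factorial : ℝ) / ((m - 2*k).factorial : ℝ) := by
    rw [eq_div_iff hf2]; linear_combination c2
  have hchoose : (m.choose k : ℝ)
      = (m.factorial : ℝ) / ((k.factorial : ℝ) * ((m-k).factorial : ℝ)) := by
    rw [eq_div_iff (by positivity)]; linear_combination c1
  rw [hdesc, hchoose]
  field_simp

lemma iter_deriv_top (m : ℕ) (f : Polynomial ℝ) (hf : f.natDegree ≤ m) :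
    Polynomial.derivative^[m] f = Polynomial.C ((m.factorial : ℝ) * f.coeff m) := by
  have h0 : (Polynomial.derivative^[m] f).natDegree ≤ 0 :=
    le_trans (Polynomial.natDegree_iterate_derivative f m) (by omega)
  rw [Polynomial.eq_C_of_natDegree_le_zero h0, Polynomial.coeff_iterate_derivative]
  simp [Nat.descFactorial_self, nsmul_eq_mul]

lemma master (m : ℕ) (f : Polynomial ℝ) (hf : f.natDegree ≤ m) :
    (∫ t in (-1:ℝ)..1, f.eval t * (Polynomial.derivative^[m] (pp m)).eval t)
      = f.coeff m * m.factorial * (2*4^m*((m.factorial:ℝ))^2/((2*m+1).factorial)) := by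
  rw [parts_iter m m le_rfl f, Nat.sub_self, iter_deriv_top m f hf]
  simp only [Function.iterate_zero_apply, Polynomial.eval_C]
  rw [intervalIntegral.integral_const_mul]
  have hppev : (∫ t in (-1:ℝ)..1, (pp m).eval t)
      = (-1:ℝ)^m * ∫ t in (-1:ℝ)..1, (1 - t^2)^m := by
    rw [← intervalIntegral.integral_const_mul]
    refine intervalIntegral.integral_congr fun t _ => ?_
    rw [pp]
    simp only [Polynomial.eval_pow, Polynomial.eval_sub, Polynomial.eval_one, Polynomial.eval_X]
    rw [show (t^2 - 1 : ℝ) = -(1 - t^2) by ring, neg_pow]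
  rw [hppev, J_val]
  ring_nf
  rw [show ((-1:ℝ))^(m*2) = 1 by rw [mul_comm, pow_mul]; norm_num]
  ring

lemma pp_natDegree (m : ℕ) : (pp m).natDegree = 2*m := by
  have hm : (X^2 - 1 : Polynomial ℝ).Monic := by
    simpa using Polynomial.monic_X_pow_sub_C (1:ℝ) (two_ne_zero)
  have h2 : (X^2 - 1 : Polynomial ℝ).natDegree = 2 := by
    simpa using Polynomial.natDegree_X_pow_sub_C (n := 2) (r := (1:ℝ))
  rw [pp, hm.natDegree_pow, h2]
  ring

lemma pp_coeff_top (m : ℕ) : (pp m).coeff (2*m) = 1 := by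
  have hm : (X^2 - 1 : Polynomial ℝ).Monic := by
    simpa using Polynomial.monic_X_pow_sub_C (1:ℝ) (two_ne_zero)
  have := (hm.pow m).coeff_natDegree
  rwa [← pp, pp_natDegree] at this

lemma DnatDeg (m : ℕ) : (Polynomial.derivative^[m] (pp m)).natDegree ≤ m :=
  le_trans (Polynomial.natDegree_iterate_derivative _ _) (by rw [pp_natDegree]; omega)

lemma Dcoeff (m : ℕ) :
    (Polynomial.derivative^[m] (pp m)).coeff m = (((2*m).descFactorial m : ℕ) : ℝ) := by
  rw [Polynomial.coeff_iterate_derivative, show m + m = 2*m by ring, pp_coeff_top]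
  simp

lemma int_PP (m : ℕ) :
    (∫ t in (-1:ℝ)..1, geg (1/2) m t * geg (1/2) m t) = 2/(2*(m:ℝ)+1) := by
  have hrw : ∀ t : ℝ, geg (1/2) m t * geg (1/2) m t
      = (1/(2^m * (m.factorial:ℝ)))^2 *
        ((Polynomial.derivative^[m] (pp m)).eval t
          * (Polynomial.derivative^[m] (pp m)).eval t) := by
    intro t; rw [geg_half_eval]; ring
  rw [intervalIntegral.integral_congr (fun t _ => hrw t),
    intervalIntegral.integral_const_mul, master m _ (DnatDeg m), Dcoeff]
  have hD : (((2*m).descFactorial m : ℕ) : ℝ) = ((2*m).factorial : ℝ) / (m.factorial : ℝ) := by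
    rw [eq_div_iff (Nat.cast_ne_zero.mpr (Nat.factorial_ne_zero _))]
    have h' := Nat.factorial_mul_descFactorial (show m ≤ 2*m by omega)
    rw [show 2*m - m = m by omega] at h'
    rw [mul_comm] at h'
    exact_mod_cast congrArg (Nat.cast (R := ℝ)) h'
  have h2m1 : ((2*m+1).factorial : ℝ) = (2*(m:ℝ)+1) * ((2*m).factorial : ℝ) := by
    rw [Nat.factorial_succ]
    push_cast
    ring
  have h4 : (4:ℝ)^m = 2^m * 2^m := by
    rw [show (4:ℝ) = 2*2 by norm_num, mul_pow]
  rw [hD, h2m1, h4]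
  have hf1 : ((m.factorial:ℝ)) ≠ 0 := Nat.cast_ne_zero.mpr (Nat.factorial_ne_zero _)
  have hf2 : (((2*m).factorial:ℝ)) ≠ 0 := Nat.cast_ne_zero.mpr (Nat.factorial_ne_zero _)
  have h2m : (2:ℝ)^m ≠ 0 := by positivity
  have hden : (2*(m:ℝ)+1) ≠ 0 := by positivity
  field_simp

noncomputable def Qpoly (m : ℕ) : Polynomial ℝ :=
  ∑ k ∈ Finset.range (m/2+1),
    Polynomial.C ((-1:ℝ)^k * Real.Gamma ((m:ℝ) - k + 3/2) /
      (Real.Gamma (3/2) * (k.factorial) * ((m-2*k).factorial)) * 2^(m-2*k)) * X^(m-2*k)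

lemma Qpoly_eval (m : ℕ) (x : ℝ) : (Qpoly m).eval x = geg (3/2) m x := by
  rw [Qpoly, Polynomial.eval_finset_sum, geg]
  refine Finset.sum_congr rfl fun k hk => ?_
  simp only [Polynomial.eval_mul, Polynomial.eval_C, Polynomial.eval_pow, Polynomial.eval_X,
    mul_pow]
  ring

lemma Qpoly_natDegree (m : ℕ) : (Qpoly m).natDegree ≤ m := by
  refine Polynomial.natDegree_sum_le_of_forall_le _ _ fun k hk => ?_
  refine le_trans (Polynomial.natDegree_C_mul_le _ _) ?_
  rw [Polynomial.natDegree_X_pow]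
  omega

lemma Qpoly_coeff (m : ℕ) :
    (Qpoly m).coeff m = Real.Gamma ((m:ℝ) + 3/2) / (Real.Gamma (3/2) * m.factorial) * 2^m := by
  rw [Qpoly, Polynomial.finset_sum_coeff]
  rw [Finset.sum_eq_single 0]
  · rw [show m - 2*0 = m by omega, Polynomial.coeff_C_mul, Polynomial.coeff_X_pow]
    norm_num
  · intro k hk hk0
    rw [Finset.mem_range] at hk
    have hne : ¬ (m = m - 2*k) := by omega
    rw [Polynomial.coeff_C_mul, Polynomial.coeff_X_pow, if_neg hne, mul_zero]
  · intro h
    simp at h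

lemma int_QP (m : ℕ) :
    (∫ t in (-1:ℝ)..1, geg (3/2) m t * geg (1/2) m t) = 2 := by
  have hrw : ∀ t : ℝ, geg (3/2) m t * geg (1/2) m t
      = (1/(2^m * (m.factorial:ℝ))) *
        ((Qpoly m).eval t * (Polynomial.derivative^[m] (pp m)).eval t) := by
    intro t; rw [Qpoly_eval, geg_half_eval]; ring
  rw [intervalIntegral.integral_congr (fun t _ => hrw t),
    intervalIntegral.integral_const_mul, master m _ (Qpoly_natDegree m), Qpoly_coeff]
  have hg1 : Real.Gamma ((m:ℝ) + 3/2)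
      = Real.sqrt π * ((2*(m+1)).factorial) / (4^(m+1) * (m+1).factorial) := by
    rw [show (m:ℝ) + 3/2 = ((m+1:ℕ):ℝ) + 1/2 by push_cast; ring, Gamma_nat_half]
  have hg2 : Real.Gamma ((3:ℝ)/2) = Real.sqrt π / 2 := by
    rw [show (3:ℝ)/2 = 1/2 + 1 by norm_num, Real.Gamma_add_one (by norm_num),
      Real.Gamma_one_half_eq]
    ring
  rw [hg1, hg2, show 2*(m+1) = (2*m+1)+1 by ring, Nat.factorial_succ (2*m+1),
    Nat.factorial_succ m, show (4:ℝ)^(m+1) = 4*4^m by ring]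
  have hf1 : ((m.factorial:ℝ)) ≠ 0 := Nat.cast_ne_zero.mpr (Nat.factorial_ne_zero _)
  have hf2 : (((2*m+1).factorial:ℝ)) ≠ 0 := Nat.cast_ne_zero.mpr (Nat.factorial_ne_zero _)
  have h2m : (2:ℝ)^m ≠ 0 := by positivity
  have h4m : (4:ℝ)^m ≠ 0 := by positivity
  have hm1 : ((m:ℝ)+1) ≠ 0 := by positivity
  push_cast
  field_simp
  ring

lemma geg_cont (α : ℝ) (m : ℕ) : Continuous (geg α m) := by
  unfold geg
  exact continuous_finset_sum _ fun k _ => by fun_prop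

lemma geg_neg (α : ℝ) (m : ℕ) (x : ℝ) : geg α m (-x) = (-1:ℝ)^m * geg α m x := by
  rw [geg, geg, Finset.mul_sum]
  refine Finset.sum_congr rfl fun k hk => ?_
  rw [Finset.mem_range] at hk
  have h2k : 2*k ≤ m := by omega
  have hpow : (2*(-x)) ^ (m - 2*k) = (-1:ℝ)^m * (2*x)^(m-2*k) := by
    rw [show (2*(-x)) = -(2*x) by ring, neg_pow]
    congr 1
    rw [show m = (m - 2*k) + 2*k by omega]
    rw [pow_add, pow_mul, show m - 2*k + 2*k - 2*k = m - 2*k by omega]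
    norm_num
  rw [hpow]
  ring

lemma even_prod (a b : ℝ) (m : ℕ) (x : ℝ) :
    geg a m (-x) * geg b m (-x) = geg a m x * geg b m x := by
  rw [geg_neg, geg_neg]
  have h1 : ((-1:ℝ)^m)*((-1:ℝ)^m) = 1 := by
    rw [← pow_add, show m+m = 2*m by ring, pow_mul]
    norm_num
  linear_combination geg a m x * geg b m x * h1

lemma half_int (f : ℝ → ℝ) (hc : Continuous f) (he : ∀ x, f (-x) = f x) :
    (∫ t in (0:ℝ)..1, f t) = (1/2) * ∫ t in (-1:ℝ)..1, f t := by
  have key : (∫ x in (0:ℝ)..1, f (-x)) = ∫ x in (-1:ℝ)..(-(0:ℝ)), f x :=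
    intervalIntegral.integral_comp_neg f
  simp only [neg_zero] at key
  have h1 : (∫ t in (-1:ℝ)..0, f t) = ∫ x in (0:ℝ)..1, f x := by
    rw [← key]
    exact intervalIntegral.integral_congr fun x _ => he x
  have habc := intervalIntegral.integral_add_adjacent_intervals
    (μ := MeasureTheory.volume) (a := (-1:ℝ)) (b := 0) (c := 1)
    (hc.intervalIntegrable _ _) (hc.intervalIntegrable _ _)
  linarith [h1, habc]

lemma F_eq (n : ℕ) (x : ℝ) :
    (∫ u in (0:ℝ)..x, piEven n u) = ((4*(n:ℝ)+3)/8) * geg (1/2) (2*n+1) (x/2) := by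
  have hg : ∀ u : ℝ, piEven n u = ∑ k ∈ Finset.range (n+1),
      (((4*(n:ℝ)+3)/16) * ((-1)^k * Real.Gamma (((2*n:ℕ):ℝ) - k + 3/2) /
        (Real.Gamma (3/2) * (k.factorial) * ((2*n - 2*k).factorial)))) * u^(2*n-2*k) := by
    intro u
    rw [piEven, geg, show (2*n)/2 = n by omega, Finset.mul_sum]
    refine Finset.sum_congr rfl fun k hk => ?_
    rw [show (2*(u/2)) = u by ring]
    ring
  rw [intervalIntegral.integral_congr (fun u _ => hg u)]
  have hcont : ∀ k : ℕ, Continuous fun u : ℝ =>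
      (((4*(n:ℝ)+3)/16) * ((-1:ℝ)^k * Real.Gamma (((2*n:ℕ):ℝ) - (k:ℝ) + 3/2) /
        (Real.Gamma (3/2) * ((k.factorial : ℕ):ℝ) * (((2*n - 2*k).factorial : ℕ):ℝ)))) *
          u^(2*n-2*k) := by
    intro k
    fun_prop
  rw [intervalIntegral.integral_finset_sum (fun k _ => (hcont k).intervalIntegrable (0:ℝ) x)]
  rw [geg, show (2*n+1)/2 = n by omega, Finset.mul_sum]
  refine Finset.sum_congr rfl fun k hk => ?_
  rw [Finset.mem_range] at hk
  rw [intervalIntegral.integral_const_mul, integral_pow, show (2*(x/2)) = x by ring]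
  have e1 : ((2*n+1:ℕ):ℝ) - k + 1/2 = ((2*n:ℕ):ℝ) - k + 3/2 := by push_cast; ring
  have e2 : 2*n+1 - 2*k = (2*n-2*k) + 1 := by omega
  have hg2 : Real.Gamma ((3:ℝ)/2) = Real.Gamma (1/2) / 2 := by
    rw [show (3:ℝ)/2 = 1/2 + 1 by norm_num, Real.Gamma_add_one (by norm_num)]
    ring
  rw [e1, e2, Nat.factorial_succ (2*n-2*k), hg2]
  rw [zero_pow (Nat.succ_ne_zero _), sub_zero]
  have hf1 : ((k.factorial:ℝ)) ≠ 0 := Nat.cast_ne_zero.mpr (Nat.factorial_ne_zero _)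
  have hf2 : (((2*n-2*k).factorial:ℝ)) ≠ 0 := Nat.cast_ne_zero.mpr (Nat.factorial_ne_zero _)
  have hG : Real.Gamma (1/2) ≠ 0 := by
    rw [Real.Gamma_one_half_eq]; positivity
  have hd : ((2*n-2*k:ℕ):ℝ) + 1 ≠ 0 := by positivity
  push_cast
  field_simp
  ring

end InAux

theorem In_eval (n : ℕ) (s : ℝ) (hs : s ≠ 0) :
    In s n = 2 * (1 - (2 * (n : ℝ) + 2) ^ 2 / s ^ 2) := by
  have hcPP : Continuous (fun t => geg (1/2) (2*n+1) t * geg (1/2) (2*n+1) t) :=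
    (InAux.geg_cont _ _).mul (InAux.geg_cont _ _)
  have hcQP : Continuous (fun t => geg (3/2) (2*n+1) t * geg (1/2) (2*n+1) t) :=
    (InAux.geg_cont _ _).mul (InAux.geg_cont _ _)
  set G : ℝ → ℝ := fun t =>
    ((1 - (2*(n:ℝ)+1)^2 / s^2) * geg (1/2) (2*n+1) t - s⁻¹^2 * geg (3/2) (2*n+1) t) *
      (((4*(n:ℝ)+3)/8) * geg (1/2) (2*n+1) t) with hG
  have h1 : (∫ x in (0:ℝ)..2, piOdd s n x * ∫ u in (0:ℝ)..x, piEven n u)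
      = ∫ x in (0:ℝ)..2, G (x/2) := by
    refine intervalIntegral.integral_congr fun x _ => ?_
    rw [InAux.F_eq n x, piOdd, hG]
  have h2 : (∫ x in (0:ℝ)..2, G (x/2)) = 2 * ∫ t in (0:ℝ)..1, G t := by
    rw [intervalIntegral.integral_comp_div (c := 2) (f := G) (by norm_num)]
    norm_num
  have hcast : 2*(((2*n+1:ℕ)):ℝ)+1 = 4*(n:ℝ)+3 := by push_cast; ring
  have hPP0 : (∫ t in (0:ℝ)..1, geg (1/2) (2*n+1) t * geg (1/2) (2*n+1) t)
      = 1/(4*(n:ℝ)+3) := by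
    rw [InAux.half_int _ hcPP (fun x => InAux.even_prod _ _ _ x), InAux.int_PP, hcast]
    ring
  have hQP0 : (∫ t in (0:ℝ)..1, geg (3/2) (2*n+1) t * geg (1/2) (2*n+1) t) = 1 := by
    rw [InAux.half_int _ hcQP (fun x => InAux.even_prod _ _ _ x), InAux.int_QP]
    norm_num
  have hGt : ∀ t : ℝ, G t
      = ((1 - (2*(n:ℝ)+1)^2/s^2) * ((4*(n:ℝ)+3)/8)) *
          (geg (1/2) (2*n+1) t * geg (1/2) (2*n+1) t)
        + (-(s⁻¹^2) * ((4*(n:ℝ)+3)/8)) *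
          (geg (3/2) (2*n+1) t * geg (1/2) (2*n+1) t) := by
    intro t
    rw [hG]
    ring
  have h3 : (∫ t in (0:ℝ)..1, G t)
      = ((1 - (2*(n:ℝ)+1)^2/s^2) * ((4*(n:ℝ)+3)/8)) * (1/(4*(n:ℝ)+3))
        + (-(s⁻¹^2) * ((4*(n:ℝ)+3)/8)) * 1 := by
    rw [intervalIntegral.integral_congr (fun t _ => hGt t)]
    rw [intervalIntegral.integral_add
      ((hcPP.intervalIntegrable _ _).const_mul _)
      ((hcQP.intervalIntegrable _ _).const_mul _)]
    rw [intervalIntegral.integral_const_mul, intervalIntegral.integral_const_mul, hPP0, hQP0]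
  rw [In, h1, h2, h3]
  have h43 : (4*(n:ℝ)+3) ≠ 0 := by positivity
  field_simp
  ring
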